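/- Let A = {a,b,c,d,e} with constraints p(a)+p(c)+p(e) = 1 and p(b)+p(d)+p(e) = 1, all values positive, and frequencies n : A → ℕ all positive with N = n(a)+n(b)+n(c)+n(d)+n(e). Then the unique maximizer of Σ_x n(x)·ln(p(x)) is given by p(e) = n(e)/N, p(a) = (1−p(e))·n(a)/(n(a)+n(c)), p(c) = (1−p(e))·n(c)/(n(a)+n(c)), p(b) = (1−p(e))·n(b)/(n(b)+n(d)), p(d) = (1−p(e))·n(d)/(n(b)+n(d)). -/

import Mathlib

private lemma gibbs_le (n x y : ℝ) (hn : 0 ≤ n) (hx : 0 < x) (hy : 0 < y) :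
    n * Real.log x ≤ n * Real.log y + (n * x / y - n) := by
  have h : Real.log (x / y) ≤ x / y - 1 := Real.log_le_sub_one_of_pos (div_pos hx hy)
  rw [Real.log_div hx.ne' hy.ne'] at h
  have h2 := mul_le_mul_of_nonneg_left h hn
  have h3 : n * (x / y) = n * x / y := by ring
  nlinarith [h2]

private lemma gibbs_lt (n x y : ℝ) (hn : 0 < n) (hx : 0 < x) (hy : 0 < y) (hne : x ≠ y) :
    n * Real.log x < n * Real.log y + (n * x / y - n) := by
  have h1 : x / y ≠ 1 := fun h => hne ((div_eq_one_iff_eq hy.ne').1 h)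
  have h : Real.log (x / y) < x / y - 1 := Real.log_lt_sub_one_of_pos (div_pos hx hy) h1
  rw [Real.log_div hx.ne' hy.ne'] at h
  have h2 := mul_lt_mul_of_pos_left h hn
  have h3 : n * (x / y) = n * x / y := by ring
  nlinarith [h2]

private lemma core (na nb nc nd nE a b c d e a' b' c' d' e' N : ℝ)
    (hna : 0 < na) (hnb : 0 < nb) (hnc : 0 < nc) (hnd : 0 < nd) (hnE : 0 < nE)
    (hN : N = na + nb + nc + nd + nE)
    (he' : e' = nE / N)
    (ha' : a' = (1 - e') * na / (na + nc))
    (hc' : c' = (1 - e') * nc / (na + nc))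
    (hb' : b' = (1 - e') * nb / (nb + nd))
    (hd' : d' = (1 - e') * nd / (nb + nd))
    (ha : 0 < a) (hb : 0 < b) (hc : 0 < c) (hd : 0 < d) (he : 0 < e)
    (hace : a + c + e = 1) (hbde : b + d + e = 1) :
    (na * Real.log a + nb * Real.log b + nc * Real.log c + nd * Real.log d + nE * Real.log e
      ≤ na * Real.log a' + nb * Real.log b' + nc * Real.log c' + nd * Real.log d' +
        nE * Real.log e') ∧
    ((a ≠ a' ∨ b ≠ b' ∨ c ≠ c' ∨ d ≠ d' ∨ e ≠ e') →
      na * Real.log a + nb * Real.log b + nc * Real.log c + nd * Real.log d + nE * Real.log e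
      < na * Real.log a' + nb * Real.log b' + nc * Real.log c' + nd * Real.log d' +
        nE * Real.log e') := by
  have hNpos : 0 < N := by rw [hN]; linarith
  have hac : 0 < na + nc := by linarith
  have hbd : 0 < nb + nd := by linarith
  have he'pos : 0 < e' := by rw [he']; exact div_pos hnE hNpos
  have he'lt : e' < 1 := by
    rw [he', div_lt_one hNpos, hN]; linarith
  have hs : 0 < 1 - e' := by linarith
  have ha'pos : 0 < a' := by rw [ha']; exact div_pos (mul_pos hs hna) hac
  have hb'pos : 0 < b' := by rw [hb']; exact div_pos (mul_pos hs hnb) hbd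
  have hc'pos : 0 < c' := by rw [hc']; exact div_pos (mul_pos hs hnc) hac
  have hd'pos : 0 < d' := by rw [hd']; exact div_pos (mul_pos hs hnd) hbd
  have hkey : (na * a / a' - na) + (nb * b / b' - nb) + (nc * c / c' - nc) +
      (nd * d / d' - nd) + (nE * e / e' - nE) = 0 := by
    have hA : a = 1 - c - e := by linarith
    have hB : b = 1 - d - e := by linarith
    subst ha' hb' hc' hd' he' hN hA hB
    have hne : na + nb + nc + nd + nE ≠ 0 := by positivity
    have hne2 : na + nb + nc + nd ≠ 0 := ne_of_gt (by linarith)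
    field_simp
    ring_nf
    field_simp
    ring
  have g1 := gibbs_le na a a' hna.le ha ha'pos
  have g2 := gibbs_le nb b b' hnb.le hb hb'pos
  have g3 := gibbs_le nc c c' hnc.le hc hc'pos
  have g4 := gibbs_le nd d d' hnd.le hd hd'pos
  have g5 := gibbs_le nE e e' hnE.le he he'pos
  constructor
  · linarith
  · rintro (hne | hne | hne | hne | hne)
    · have := gibbs_lt na a a' hna ha ha'pos hne; linarith
    · have := gibbs_lt nb b b' hnb hb hb'pos hne; linarith
    · have := gibbs_lt nc c c' hnc hc hc'pos hne; linarith
    · have := gibbs_lt nd d d' hnd hd hd'pos hne; linarith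
    · have := gibbs_lt nE e e' hnE he he'pos hne; linarith

theorem stmt5 (na nb nc nd nE : ℕ)
    (hna : 0 < na) (hnb : 0 < nb) (hnc : 0 < nc) (hnd : 0 < nd) (hnE : 0 < nE)
    (pa pb pc pd pe : ℝ) :
    let N : ℝ := (na : ℝ) + nb + nc + nd + nE
    let Feas : ℝ → ℝ → ℝ → ℝ → ℝ → Prop := fun a b c d e =>
      0 < a ∧ 0 < b ∧ 0 < c ∧ 0 < d ∧ 0 < e ∧ a + c + e = 1 ∧ b + d + e = 1
    let ℓ : ℝ → ℝ → ℝ → ℝ → ℝ → ℝ := fun a b c d e =>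
      (na : ℝ) * Real.log a + (nb : ℝ) * Real.log b + (nc : ℝ) * Real.log c +
        (nd : ℝ) * Real.log d + (nE : ℝ) * Real.log e
    ((Feas pa pb pc pd pe ∧
        ∀ a b c d e, Feas a b c d e → ℓ a b c d e ≤ ℓ pa pb pc pd pe) ↔
      (pe = (nE : ℝ) / N ∧
       pa = (1 - pe) * (na : ℝ) / ((na : ℝ) + nc) ∧
       pc = (1 - pe) * (nc : ℝ) / ((na : ℝ) + nc) ∧
       pb = (1 - pe) * (nb : ℝ) / ((nb : ℝ) + nd) ∧
       pd = (1 - pe) * (nd : ℝ) / ((nb : ℝ) + nd))) := by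
  intro N Feas ℓ
  have hna' : (0:ℝ) < na := by exact_mod_cast hna
  have hnb' : (0:ℝ) < nb := by exact_mod_cast hnb
  have hnc' : (0:ℝ) < nc := by exact_mod_cast hnc
  have hnd' : (0:ℝ) < nd := by exact_mod_cast hnd
  have hnE' : (0:ℝ) < nE := by exact_mod_cast hnE
  have hNdef : N = (na:ℝ) + nb + nc + nd + nE := rfl
  have hNpos : 0 < N := by rw [hNdef]; linarith
  have hac : (0:ℝ) < (na:ℝ) + nc := by linarith
  have hbd : (0:ℝ) < (nb:ℝ) + nd := by linarith
  set e' : ℝ := (nE : ℝ) / N with he'def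
  set a' : ℝ := (1 - e') * (na : ℝ) / ((na : ℝ) + nc) with ha'def
  set c' : ℝ := (1 - e') * (nc : ℝ) / ((na : ℝ) + nc) with hc'def
  set b' : ℝ := (1 - e') * (nb : ℝ) / ((nb : ℝ) + nd) with hb'def
  set d' : ℝ := (1 - e') * (nd : ℝ) / ((nb : ℝ) + nd) with hd'def
  have he'pos : 0 < e' := div_pos hnE' hNpos
  have he'lt : e' < 1 := by
    rw [he'def, div_lt_one hNpos, hNdef]; linarith
  have hs : 0 < 1 - e' := by linarith
  have ha'pos : 0 < a' := div_pos (mul_pos hs hna') hac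
  have hb'pos : 0 < b' := div_pos (mul_pos hs hnb') hbd
  have hc'pos : 0 < c' := div_pos (mul_pos hs hnc') hac
  have hd'pos : 0 < d' := div_pos (mul_pos hs hnd') hbd
  have hsum1 : a' + c' + e' = 1 := by
    rw [ha'def, hc'def]; field_simp; ring
  have hsum2 : b' + d' + e' = 1 := by
    rw [hb'def, hd'def]; field_simp; ring
  have hfeas' : Feas a' b' c' d' e' :=
    ⟨ha'pos, hb'pos, hc'pos, hd'pos, he'pos, hsum1, hsum2⟩
  constructor
  · rintro ⟨⟨ha, hb, hc, hd, he, hace, hbde⟩, hmax⟩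
    have hcore := core (na:ℝ) nb nc nd nE pa pb pc pd pe a' b' c' d' e' N
      hna' hnb' hnc' hnd' hnE' hNdef he'def ha'def hc'def hb'def hd'def
      ha hb hc hd he hace hbde
    have hmle := hmax a' b' c' d' e' hfeas'
    simp only [ℓ] at hmle
    have hpe : pe = e' := by
      by_contra hne
      have := hcore.2 (Or.inr (Or.inr (Or.inr (Or.inr hne)))); linarith
    have hpa : pa = a' := by
      by_contra hne; have := hcore.2 (Or.inl hne); linarith
    have hpb : pb = b' := by
      by_contra hne; have := hcore.2 (Or.inr (Or.inl hne)); linarith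
    have hpc : pc = c' := by
      by_contra hne; have := hcore.2 (Or.inr (Or.inr (Or.inl hne))); linarith
    have hpd : pd = d' := by
      by_contra hne; have := hcore.2 (Or.inr (Or.inr (Or.inr (Or.inl hne)))); linarith
    refine ⟨hpe, ?_, ?_, ?_, ?_⟩ <;> rw [hpe]
    · exact hpa
    · exact hpc
    · exact hpb
    · exact hpd
  · rintro ⟨hpe, hpa, hpc, hpb, hpd⟩
    have hpa' : pa = a' := by rw [hpa, hpe]
    have hpb' : pb = b' := by rw [hpb, hpe]
    have hpc' : pc = c' := by rw [hpc, hpe]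
    have hpd' : pd = d' := by rw [hpd, hpe]
    have hpe' : pe = e' := hpe
    subst hpa' hpb' hpc' hpd' hpe'
    refine ⟨hfeas', ?_⟩
    rintro a b c d e ⟨ha, hb, hc, hd, he, hace, hbde⟩
    exact (core (na:ℝ) nb nc nd nE a b c d e a' b' c' d' e' N
      hna' hnb' hnc' hnd' hnE' hNdef he'def ha'def hc'def hb'def hd'def
      ha hb hc hd he hace hbde).1
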